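/- Define h : ℝ × ℝ → ℝ by h(a, b) = ∫ sigmoid(a·min(w, 0) + b·max(w, 0)) dγ₁(w), where sigmoid(x) = 1/(1 + exp(−x)) and γ₁ is the standard Gaussian measure on ℝ. Then h is continuous and h is not injective: there exist (a, b) ≠ (a', b') with h(a, b) = h(a', b'). -/

import Mathlib

open MeasureTheory ProbabilityTheory

/-- The logistic sigmoid function `x ↦ 1 / (1 + e^{−x})`. -/
noncomputable def sigmoid (x : ℝ) : ℝ := 1 / (1 + Real.exp (-x))

/-- The expected sigmoid of the piecewise linear function
`g_{a,b}(w) = a·w·1(w ≤ 0) + b·w·1(w > 0)` under a standard Gaussian `w`: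
`h(a, b) = ∫ sigmoid(a·min(w,0) + b·max(w,0)) dγ₁(w)`. -/
noncomputable def meanSigmoidPWL (ab : ℝ × ℝ) : ℝ :=
  ∫ w, sigmoid (ab.1 * min w 0 + ab.2 * max w 0) ∂(gaussianReal 0 1)

lemma sigmoid_continuous : Continuous sigmoid := by
  apply continuous_const.div (continuous_const.add (Real.continuous_exp.comp continuous_neg))
  intro x
  have := Real.exp_pos (-x)
  show 1 + Real.exp (-x) ≠ 0
  intro h; linarith

lemma sigmoid_abs_le (x : ℝ) : ‖sigmoid x‖ ≤ 1 := by
  rw [Real.norm_eq_abs, abs_of_nonneg (by unfold sigmoid; positivity)]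
  unfold sigmoid
  rw [div_le_one (by positivity)]
  nlinarith [Real.exp_pos (-x)]

lemma gauss_map_neg : (gaussianReal 0 1).map (fun x : ℝ => -x) = gaussianReal 0 1 := by
  have := gaussianReal_map_const_mul (μ := 0) (v := 1) (-1)
  simp only [neg_one_mul] at this
  convert this using 2
  · simp
  · ext; simp

/-- `h` is continuous but not injective: distinct parameters `(a, b) ≠ (a', b')` can
produce the same mean. -/
theorem meanSigmoidPWL_continuous_not_injective :
    Continuous meanSigmoidPWL ∧ ¬ Function.Injective meanSigmoidPWL := by
  constructor
  · apply continuous_of_dominated (bound := fun _ => (1 : ℝ))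
    · intro ab
      exact (sigmoid_continuous.comp ((continuous_const.mul (continuous_id.min continuous_const)).add
        (continuous_const.mul (continuous_id.max continuous_const)))).aestronglyMeasurable
    · intro ab
      exact Filter.Eventually.of_forall fun w => sigmoid_abs_le _
    · exact integrable_const 1
    · refine Filter.Eventually.of_forall fun w => ?_
      exact sigmoid_continuous.comp ((continuous_fst.mul continuous_const).add
        (continuous_snd.mul continuous_const))
  · intro hinj
    have key : ∀ a b : ℝ, meanSigmoidPWL (a, b) = meanSigmoidPWL (-b, -a) := by
      intro a b
      unfold meanSigmoidPWL
      have hm : Measurable (fun x : ℝ => -x) := measurable_neg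
      calc ∫ w, sigmoid (a * min w 0 + b * max w 0) ∂(gaussianReal 0 1)
          = ∫ w, sigmoid (a * min w 0 + b * max w 0) ∂((gaussianReal 0 1).map (fun x => -x)) := by
            rw [gauss_map_neg]
        _ = ∫ w, sigmoid (a * min (-w) 0 + b * max (-w) 0) ∂(gaussianReal 0 1) := by
            rw [integral_map hm.aemeasurable]
            exact (sigmoid_continuous.comp (by fun_prop)).aestronglyMeasurable
        _ = ∫ w, sigmoid ((-b) * min w 0 + (-a) * max w 0) ∂(gaussianReal 0 1) := by
            congr 1; ext w
            have h1 : min (-w) 0 = -max w 0 := by rcases le_total w 0 with h|h <;> simp [min_eq_left, min_eq_right, max_eq_left, max_eq_right, h, neg_nonneg, neg_nonpos] <;> linarith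
            have h2 : max (-w) 0 = -min w 0 := by rcases le_total w 0 with h|h <;> simp [min_eq_left, min_eq_right, max_eq_left, max_eq_right, h, neg_nonneg, neg_nonpos] <;> linarith
            rw [h1, h2]; ring_nf
    have := hinj (key 1 2)
    rw [Prod.ext_iff] at this
    norm_num at this
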